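/- Let D- be a canonical negative Boolean automaton double-cycle with cycles of sizes n and m: f_c(x) = (¬x^ℓ_{n-1}) ∧ (¬x^r_{m-1}), other automata copy their predecessor. Then for every configuration x there is a sequence of at most 2n+m-2 asynchronous single-automaton updates transforming x into the all-zeros configuration (0^n, 0^m). -/
import Mathlib


/-- A configuration of a Boolean automaton double-cycle with cycles of sizes `n`
and `m`: the shared automaton `c` is index 0 of both cycles (so valid
configurations satisfy `x.1 0 = x.2 0`). -/
abbrev Cfg (n m : ℕ) := (Fin n → Bool) × (Fin m → Bool)

/-- One asynchronous single-automaton update in a double-cycle whose shared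
automaton `c` computes `fc`; every non-shared automaton copies its predecessor. -/
inductive Step {n m : ℕ} (fc : Cfg n m → Bool) : Cfg n m → Cfg n m → Prop
  | left (x : Cfg n m) (i : Fin n) (hi : 1 ≤ i.val) :
      Step fc x (Function.update x.1 i (x.1 ⟨i.val - 1, by have := i.isLt; omega⟩), x.2)
  | right (x : Cfg n m) (j : Fin m) (hj : 1 ≤ j.val) :
      Step fc x (x.1, Function.update x.2 j (x.2 ⟨j.val - 1, by have := j.isLt; omega⟩))
  | center (x : Cfg n m) (i : Fin n) (j : Fin m) (hi : i.val = 0) (hj : j.val = 0) :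
      Step fc x (Function.update x.1 i (fc x), Function.update x.2 j (fc x))

/-- `Steps fc k x y`: configuration `y` is obtained from `x` by exactly `k`
asynchronous single-automaton updates. -/
def Steps {n m : ℕ} (fc : Cfg n m → Bool) : ℕ → Cfg n m → Cfg n m → Prop
  | 0, x, y => x = y
  | k + 1, x, y => ∃ z, Step fc x z ∧ Steps fc k z y

lemma steps_trans {n m : ℕ} {fc : Cfg n m → Bool} :
    ∀ {a b : ℕ} {x y z : Cfg n m}, Steps fc a x y → Steps fc b y z →
      Steps fc (a + b) x z := by
  intro a
  induction a with
  | zero =>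
    intro b x y z h1 h2
    cases h1
    simpa using h2
  | succ a ih =>
    intro b x y z h1 h2
    obtain ⟨w, hw, hrest⟩ := h1
    rw [Nat.succ_add]
    exact ⟨w, hw, ih hrest h2⟩

lemma left_fill {n m : ℕ} (hn : 0 < n) (fc : Cfg n m → Bool) (b : Bool) :
    ∀ (k : ℕ) (x : Cfg n m), k ≤ n - 1 →
      (∀ i : Fin n, i.val ≤ n - 1 - k → x.1 i = b) →
      Steps fc k x ((fun _ => b), x.2) := by
  intro k
  induction k with
  | zero =>
    intro x _ h
    show x = _
    exact Prod.ext (funext fun i => h i (by omega)) rfl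
  | succ k ih =>
    intro x hk h
    refine ⟨_, Step.left (fc := fc) x ⟨n - 1 - k, by omega⟩
      (by show 1 ≤ n - 1 - k; omega), ?_⟩
    refine ih _ (by omega) ?_
    intro i hi
    rcases Nat.lt_or_ge i.val (n - 1 - k) with hlt | hge
    · show Function.update x.1 _ _ i = b
      rw [Function.update_of_ne (by
        intro hEq; rw [hEq] at hlt; simp at hlt)]
      exact h i (by omega)
    · have hie : i = ⟨n - 1 - k, by omega⟩ := Fin.ext (by
        show i.val = n - 1 - k; omega)
      rw [hie]
      show Function.update x.1 _ _ _ = b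
      simp only [Function.update_self]
      exact h _ (by show n - 1 - k - 1 ≤ n - 1 - (k + 1); omega)

lemma right_fill {n m : ℕ} (hm : 0 < m) (fc : Cfg n m → Bool) (b : Bool) :
    ∀ (k : ℕ) (x : Cfg n m), k ≤ m - 1 →
      (∀ j : Fin m, j.val ≤ m - 1 - k → x.2 j = b) →
      Steps fc k x (x.1, (fun _ => b)) := by
  intro k
  induction k with
  | zero =>
    intro x _ h
    show x = _
    exact Prod.ext rfl (funext fun j => h j (by omega))
  | succ k ih =>
    intro x hk h
    refine ⟨_, Step.right (fc := fc) x ⟨m - 1 - k, by omega⟩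
      (by show 1 ≤ m - 1 - k; omega), ?_⟩
    refine ih _ (by omega) ?_
    intro j hj
    rcases Nat.lt_or_ge j.val (m - 1 - k) with hlt | hge
    · show Function.update x.2 _ _ j = b
      rw [Function.update_of_ne (by
        intro hEq; rw [hEq] at hlt; simp at hlt)]
      exact h j (by omega)
    · have hje : j = ⟨m - 1 - k, by omega⟩ := Fin.ext (by
        show j.val = m - 1 - k; omega)
      rw [hje]
      show Function.update x.2 _ _ _ = b
      simp only [Function.update_self]
      exact h _ (by show m - 1 - k - 1 ≤ m - 1 - (k + 1); omega)

/-- In a canonical negative double-cycle (f_c(x) = ¬x^ℓ_{n-1} ∧ ¬x^r_{m-1}), every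
configuration reaches the all-zeros configuration in at most 2n+m-2 updates. -/
theorem stmt10 (n m : ℕ) (hn : 0 < n) (hm : 0 < m) (x : Cfg n m)
    (hshare : x.1 ⟨0, hn⟩ = x.2 ⟨0, hm⟩) :
    ∃ k ≤ 2 * n + m - 2,
      Steps (fun y : Cfg n m => !(y.1 ⟨n - 1, by omega⟩) && !(y.2 ⟨m - 1, by omega⟩))
        k x ((fun _ => false, fun _ => false) : Cfg n m) := by
  set fc : Cfg n m → Bool :=
    fun y : Cfg n m => !(y.1 ⟨n - 1, by omega⟩) && !(y.2 ⟨m - 1, by omega⟩) with hfc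
  rcases hb : x.1 ⟨0, hn⟩ with _ | _
  · -- shared automaton is already false
    have h1 : Steps fc (n - 1) x ((fun _ => false), x.2) := by
      refine left_fill hn fc false (n - 1) x le_rfl ?_
      intro i hi
      have : i = ⟨0, hn⟩ := Fin.ext (by show i.val = 0; omega)
      rw [this, hb]
    have h2 : Steps fc (m - 1) ((fun _ => false), x.2)
        ((fun _ => false, fun _ => false) : Cfg n m) := by
      refine right_fill hm fc false (m - 1) _ le_rfl ?_
      intro j hj
      have : j = ⟨0, hm⟩ := Fin.ext (by show j.val = 0; omega)
      rw [this]
      exact (hshare ▸ hb : x.2 ⟨0, hm⟩ = false)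
    exact ⟨(n - 1) + (m - 1), by omega, steps_trans h1 h2⟩
  · -- shared automaton is true: fill left with true, flip center, then zero out
    have h1 : Steps fc (n - 1) x ((fun _ => true), x.2) := by
      refine left_fill hn fc true (n - 1) x le_rfl ?_
      intro i hi
      have : i = ⟨0, hn⟩ := Fin.ext (by show i.val = 0; omega)
      rw [this, hb]
    set y : Cfg n m := ((fun _ => true), x.2) with hy
    have hfcy : fc y = false := by simp [hfc, hy]
    have h2 : Steps fc 1 y
        (Function.update y.1 ⟨0, hn⟩ (fc y), Function.update y.2 ⟨0, hm⟩ (fc y)) :=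
      ⟨_, Step.center y ⟨0, hn⟩ ⟨0, hm⟩ rfl rfl, rfl⟩
    set z : Cfg n m :=
      (Function.update y.1 ⟨0, hn⟩ (fc y), Function.update y.2 ⟨0, hm⟩ (fc y)) with hz
    have h3 : Steps fc (n - 1) z ((fun _ => false), z.2) := by
      refine left_fill hn fc false (n - 1) z le_rfl ?_
      intro i hi
      have : i = ⟨0, hn⟩ := Fin.ext (by show i.val = 0; omega)
      rw [this, hz]
      simp [hfcy]
    have h4 : Steps fc (m - 1) ((fun _ => false), z.2)
        ((fun _ => false, fun _ => false) : Cfg n m) := by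
      refine right_fill hm fc false (m - 1) _ le_rfl ?_
      intro j hj
      have : j = ⟨0, hm⟩ := Fin.ext (by show j.val = 0; omega)
      rw [this, hz]
      simp [hfcy]
    exact ⟨(n - 1) + (1 + ((n - 1) + (m - 1))), by omega,
      steps_trans h1 (steps_trans h2 (steps_trans h3 h4))⟩
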